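/- Let φ(x) = log(1+e^x) and σ(x) = φ'(x) = e^x/(1+e^x). Define F: ℝ^5 → ℝ^5 by F(A,B,C,D,Z) = (A+φ(Z), B-φ(-Z), C+φ(Z), D-φ(-Z), -Z). Let P be the 5×5 antisymmetric matrix (with coordinate order A,B,C,D,Z) determined by P_{AB}=1, P_{BZ}=1, P_{ZA}=1, P_{ZC}=1, P_{CD}=1, P_{DZ}=1, and let P' be the antisymmetric matrix determined by P'_{AZ}=1, P'_{ZD}=1, P'_{DA}=1, P'_{ZB}=1, P'_{BC}=1, P'_{CZ}=1. Then the Jacobian matrix J of F satisfies, at every point, J·P·J^T = P'. -/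

import Mathlib

open Matrix

noncomputable def phi (x : ℝ) : ℝ := Real.log (1 + Real.exp x)

/-- The flip map in the extended shear coordinates (A,B,C,D,Z). -/
noncomputable def flipMap (q : Fin 5 → ℝ) : Fin 5 → ℝ :=
  ![q 0 + phi (q 4), q 1 - phi (-q 4), q 2 + phi (q 4), q 3 - phi (-q 4), -q 4]

/-- The Jacobian matrix of `flipMap` at the point `p`. -/
noncomputable def jac (p : Fin 5 → ℝ) : Matrix (Fin 5) (Fin 5) ℝ :=
  fun i j => fderiv ℝ (fun q => flipMap q i) p (Pi.single j 1)

/-- Local Fock Poisson tensor before the flip (coordinate order A,B,C,D,Z). -/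
def Pmat : Matrix (Fin 5) (Fin 5) ℝ :=
  !![0, 1, 0, 0, -1;
     -1, 0, 0, 0, 1;
     0, 0, 0, 1, -1;
     0, 0, -1, 0, 1;
     1, -1, 1, -1, 0]

/-- Local Fock Poisson tensor after the flip. -/
def Pmat' : Matrix (Fin 5) (Fin 5) ℝ :=
  !![0, 0, 0, -1, 1;
     0, 0, 1, 0, -1;
     0, -1, 0, 0, 1;
     1, 0, 0, 0, -1;
     -1, 1, -1, 1, 0]

noncomputable def sig (x : ℝ) : ℝ := Real.exp x / (1 + Real.exp x)

lemma hasDerivAt_phi (x : ℝ) : HasDerivAt phi (sig x) x := by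
  have h1 : HasDerivAt (fun y => 1 + Real.exp y) (Real.exp x) x :=
    (Real.hasDerivAt_exp x).const_add 1
  have hpos : (1 : ℝ) + Real.exp x ≠ 0 := by positivity
  exact (by simpa [sig] using h1.log hpos :
    HasDerivAt (fun y => Real.log (1 + Real.exp y)) (sig x) x)

lemma proj_hasFDerivAt (k : Fin 5) (p : Fin 5 → ℝ) :
    HasFDerivAt (fun q : Fin 5 → ℝ => q k)
      (ContinuousLinearMap.proj k : (Fin 5 → ℝ) →L[ℝ] ℝ) p := by
  have := (ContinuousLinearMap.proj k : (Fin 5 → ℝ) →L[ℝ] ℝ).hasFDerivAt (x := p)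
  exact this

lemma jac_eq (p : Fin 5 → ℝ) :
    jac p = !![1,0,0,0, sig (p 4);
               0,1,0,0, sig (-p 4);
               0,0,1,0, sig (p 4);
               0,0,0,1, sig (-p 4);
               0,0,0,0,-1] := by
  have hphi : HasFDerivAt (fun q : Fin 5 → ℝ => phi (q 4))
      (sig (p 4) • (ContinuousLinearMap.proj 4 : (Fin 5 → ℝ) →L[ℝ] ℝ)) p :=
    (hasDerivAt_phi (p 4)).comp_hasFDerivAt (h₂ := phi) (f := fun q : Fin 5 → ℝ => q 4) p (proj_hasFDerivAt 4 p)
  have hphin : HasFDerivAt (fun q : Fin 5 → ℝ => phi (-q 4))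
      (-(sig (-p 4) • (ContinuousLinearMap.proj 4 : (Fin 5 → ℝ) →L[ℝ] ℝ))) p := by
    have h4 : HasFDerivAt (fun q : Fin 5 → ℝ => -q 4)
        (-(ContinuousLinearMap.proj 4 : (Fin 5 → ℝ) →L[ℝ] ℝ)) p :=
      (proj_hasFDerivAt 4 p).neg
    have := (hasDerivAt_phi (-p 4)).comp_hasFDerivAt p h4
    rw [smul_neg] at this
    exact this
  have e0 : fderiv ℝ (fun q : Fin 5 → ℝ => q 0 + phi (q 4)) p
      = ((ContinuousLinearMap.proj 0 : (Fin 5 → ℝ) →L[ℝ] ℝ)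
        + sig (p 4) • ContinuousLinearMap.proj 4) :=
    ((proj_hasFDerivAt 0 p).add hphi).fderiv
  have e1 : fderiv ℝ (fun q : Fin 5 → ℝ => q 1 - phi (-q 4)) p
      = ((ContinuousLinearMap.proj 1 : (Fin 5 → ℝ) →L[ℝ] ℝ)
        - -(sig (-p 4) • ContinuousLinearMap.proj 4)) :=
    ((proj_hasFDerivAt 1 p).sub hphin).fderiv
  have e2 : fderiv ℝ (fun q : Fin 5 → ℝ => q 2 + phi (q 4)) p
      = ((ContinuousLinearMap.proj 2 : (Fin 5 → ℝ) →L[ℝ] ℝ)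
        + sig (p 4) • ContinuousLinearMap.proj 4) :=
    ((proj_hasFDerivAt 2 p).add hphi).fderiv
  have e3 : fderiv ℝ (fun q : Fin 5 → ℝ => q 3 - phi (-q 4)) p
      = ((ContinuousLinearMap.proj 3 : (Fin 5 → ℝ) →L[ℝ] ℝ)
        - -(sig (-p 4) • ContinuousLinearMap.proj 4)) :=
    ((proj_hasFDerivAt 3 p).sub hphin).fderiv
  have e4 : fderiv ℝ (fun q : Fin 5 → ℝ => -q 4) p
      = (-(ContinuousLinearMap.proj 4 : (Fin 5 → ℝ) →L[ℝ] ℝ)) :=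
    (proj_hasFDerivAt 4 p).neg.fderiv
  funext i j
  fin_cases i <;> fin_cases j <;>
    simp [jac, flipMap, e0, e1, e2, e3, e4, Pi.single_apply] <;> rfl

lemma sig_add (x : ℝ) : sig x + sig (-x) = 1 := by
  have h1 : (1:ℝ) + Real.exp x ≠ 0 := by positivity
  have h2 : (1:ℝ) + Real.exp (-x) ≠ 0 := by positivity
  have he : Real.exp (-x) * Real.exp x = 1 := by
    rw [← Real.exp_add]; simp
  unfold sig
  field_simp
  nlinarith [he]

lemma transpose_aux (s t : ℝ) :
    (!![1,0,0,0,s; 0,1,0,0,t; 0,0,1,0,s; 0,0,0,1,t; 0,0,0,0,(-1:ℝ)])ᵀ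
      = !![1,0,0,0,0; 0,1,0,0,0; 0,0,1,0,0; 0,0,0,1,0; s,t,s,t,-1] := by
  funext i j
  fin_cases i <;> fin_cases j <;> simp [Matrix.transpose_apply] <;> rfl

lemma key (s t : ℝ) (h : s + t = 1) :
    !![1,0,0,0,s; 0,1,0,0,t; 0,0,1,0,s; 0,0,0,1,t; 0,0,0,0,(-1:ℝ)] * Pmat *
      !![1,0,0,0,0; 0,1,0,0,0; 0,0,1,0,0; 0,0,0,1,0; s,t,s,t,-1] = Pmat' := by
  funext i j
  fin_cases i <;> fin_cases j <;>
    simp [Matrix.mul_apply, Fin.sum_univ_five, Pmat, Pmat',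
      Matrix.cons_val', Matrix.cons_val_zero, Matrix.cons_val_one, Matrix.head_cons,
      Matrix.head_fin_const, Matrix.empty_val', Matrix.cons_val_fin_one] <;>
    linarith

theorem flip_preserves_poisson (p : Fin 5 → ℝ) :
    jac p * Pmat * (jac p)ᵀ = Pmat' := by
  rw [jac_eq, transpose_aux]
  exact key _ _ (sig_add (p 4))
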